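/- Let {ρ_k} be a finite ensemble of positive semidefinite operators with Σ Tr ρ_k = 1 on a finite-dimensional Hilbert space. Then Λ := Tr√(Σ_k ρ_k²) ≤ 1. -/

import Mathlib

open Matrix ComplexOrder

namespace Matrix.PosSemidef

/-- The positive semidefinite square root of a positive semidefinite matrix
(the definition Mathlib had in December 2024, since removed). -/
noncomputable def sqrt {n : Type*} [Fintype n] [DecidableEq n] {𝕜 : Type*} [RCLike 𝕜]
    {A : Matrix n n 𝕜} (hA : A.PosSemidef) : Matrix n n 𝕜 :=
  hA.1.eigenvectorUnitary.1 * diagonal ((↑) ∘ (√·) ∘ hA.1.eigenvalues) *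
  (star hA.1.eigenvectorUnitary : Matrix n n 𝕜)

end Matrix.PosSemidef

lemma Matrix.PosSemidef.posSemidef_sqrt {n : Type*} [Fintype n] [DecidableEq n] {𝕜 : Type*}
    [RCLike 𝕜] {A : Matrix n n 𝕜} (hA : A.PosSemidef) : hA.sqrt.PosSemidef := by
  unfold Matrix.PosSemidef.sqrt
  have hD : (diagonal ((↑) ∘ (√·) ∘ hA.1.eigenvalues : n → 𝕜)).PosSemidef :=
    Matrix.PosSemidef.diagonal (fun i => by
      simpa using RCLike.ofReal_nonneg.mpr (Real.sqrt_nonneg (hA.1.eigenvalues i)))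
  have := hD.mul_mul_conjTranspose_same (hA.1.eigenvectorUnitary : Matrix n n 𝕜)
  simpa [Matrix.star_eq_conjTranspose] using this

lemma Matrix.PosSemidef.sqrt_mul_self {n : Type*} [Fintype n] [DecidableEq n] {𝕜 : Type*}
    [RCLike 𝕜] {A : Matrix n n 𝕜} (hA : A.PosSemidef) : hA.sqrt * hA.sqrt = A := by
  unfold Matrix.PosSemidef.sqrt
  have hU := Unitary.coe_star_mul_self hA.1.eigenvectorUnitary
  simp only [mul_assoc]
  rw [← mul_assoc (star (hA.1.eigenvectorUnitary : Matrix n n 𝕜)), hU, one_mul,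
    ← mul_assoc (diagonal _), diagonal_mul_diagonal]
  have hd : (fun i => (RCLike.ofReal ∘ (fun x => √x) ∘ hA.1.eigenvalues) i *
      (RCLike.ofReal ∘ (fun x => √x) ∘ hA.1.eigenvalues) i) = (RCLike.ofReal ∘ hA.1.eigenvalues : n → 𝕜) := by
    funext i
    simp only [Function.comp_apply]
    rw [← RCLike.ofReal_mul, Real.mul_self_sqrt (hA.eigenvalues_nonneg i)]
  rw [hd]
  conv_rhs => rw [hA.1.spectral_theorem, Unitary.conjStarAlgAut_apply]
  simp only [mul_assoc]

private lemma psd_trace_re_nonneg {n : Type*} [Fintype n] [DecidableEq n]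
    {A : Matrix n n ℂ} (hA : A.PosSemidef) : 0 ≤ A.trace.re := by
  rw [Matrix.trace, Complex.re_sum]
  refine Finset.sum_nonneg fun i _ => ?_
  have := hA.re_dotProduct_nonneg (Pi.single i 1)
  simpa [dotProduct, Matrix.mulVec, Pi.single_apply, Finset.sum_ite_eq,
    Matrix.diag_apply, mul_comm] using this

private lemma psd_smul_real {n : Type*} [Fintype n] {A : Matrix n n ℂ}
    (hA : A.PosSemidef) {ε : ℝ} (hε : 0 ≤ ε) : ((ε : ℂ) • A).PosSemidef := by
  refine Matrix.PosSemidef.of_dotProduct_mulVec_nonneg ?_ (fun x => ?_)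
  · unfold Matrix.IsHermitian
    rw [Matrix.conjTranspose_smul, hA.isHermitian.eq]
    congr 1
    simp [Complex.star_def, Complex.conj_ofReal]
  · rw [Matrix.smul_mulVec, dotProduct_smul, smul_eq_mul]
    exact mul_nonneg (by exact_mod_cast hε) (hA.dotProduct_mulVec_nonneg x)

private lemma posdef_smul_real {n : Type*} [Fintype n] [DecidableEq n]
    {ε : ℝ} (hε : 0 < ε) : ((ε : ℂ) • (1 : Matrix n n ℂ)).PosDef := by
  refine Matrix.PosDef.of_dotProduct_mulVec_pos (psd_smul_real Matrix.PosSemidef.one hε.le).1 fun x hx => ?_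
  rw [Matrix.smul_mulVec, dotProduct_smul, smul_eq_mul]
  exact mul_pos (by exact_mod_cast hε) (Matrix.PosDef.one.dotProduct_mulVec_pos hx)

private lemma psd_sum {n K : Type*} [Fintype n] [DecidableEq K] (s : Finset K)
    (ρ : K → Matrix n n ℂ) (hρ : ∀ k, (ρ k).PosSemidef) :
    (∑ k ∈ s, ρ k).PosSemidef := by
  induction s using Finset.induction with
  | empty => simpa using Matrix.PosSemidef.zero
  | insert _ _ h ih => rw [Finset.sum_insert h]; exact (hρ _).add ih

/-- If `ρ` is PSD and `M` is a contraction (`MᴴM ≤ 1`), then `Re Tr(Mρ) ≤ Re Tr ρ`. -/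
private lemma trace_re_mul_le {n : Type*} [Fintype n] [DecidableEq n]
    {ρ M : Matrix n n ℂ} (hρ : ρ.PosSemidef)
    (hM : ((1 : Matrix n n ℂ) - Mᴴ * M).PosSemidef) :
    (M * ρ).trace.re ≤ ρ.trace.re := by
  set B := hρ.sqrt with hBdef
  have hB : B.PosSemidef := hρ.posSemidef_sqrt
  have hBB : B * B = ρ := hρ.sqrt_mul_self
  have htr : (M * ρ).trace = (B * (M * B)).trace := by
    rw [← hBB, ← mul_assoc, ← mul_assoc, Matrix.trace_mul_cycle]
  rw [htr, ← hBB, Matrix.trace, Matrix.trace, Complex.re_sum, Complex.re_sum]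
  refine Finset.sum_le_sum fun i _ => ?_
  simp only [Matrix.diag_apply]
  -- the i-th column of B
  set xf : n → ℂ := fun j => B j i with hxf
  have hstar : star xf = fun j => B i j := by
    funext j
    simp only [Pi.star_apply, hxf]
    rw [← Matrix.conjTranspose_apply, hB.isHermitian]
  have h1 : (B * (M * B)) i i = dotProduct (star xf) (M *ᵥ xf) := by
    rw [hstar]
    simp only [Matrix.mul_apply, dotProduct, Matrix.mulVec, dotProduct, hxf]
  have h2 : (B * B) i i = dotProduct (star xf) xf := by
    rw [hstar]
    simp only [Matrix.mul_apply, dotProduct, hxf]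
  -- move to EuclideanSpace
  set x : EuclideanSpace ℂ n := (WithLp.equiv 2 (n → ℂ)).symm xf with hx
  set y : EuclideanSpace ℂ n := (WithLp.equiv 2 (n → ℂ)).symm (M *ᵥ xf) with hy
  have hxy : inner ℂ x y = dotProduct (star xf) (M *ᵥ xf) :=
    by rw [dotProduct_comm]; rfl
  have hxx : inner ℂ x x = dotProduct (star xf) xf :=
    by rw [dotProduct_comm]; rfl
  have hyy : inner ℂ y y = dotProduct (star (M *ᵥ xf)) (M *ᵥ xf) :=
    by rw [dotProduct_comm]; rfl
  -- contraction : ‖y‖ ≤ ‖x‖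
  have hcon : ‖y‖ ≤ ‖x‖ := by
    have h0 := hM.dotProduct_mulVec_nonneg xf
    rw [Matrix.sub_mulVec, dotProduct_sub, Matrix.one_mulVec] at h0
    have h0' : (dotProduct (star xf) ((Mᴴ * M) *ᵥ xf)).re ≤
        (dotProduct (star xf) xf).re := by
      have := (Complex.le_def.mp (sub_nonneg.mp h0)).1
      simpa [Complex.sub_re] using this
    have hrw : dotProduct (star xf) ((Mᴴ * M) *ᵥ xf)
        = dotProduct (star (M *ᵥ xf)) (M *ᵥ xf) := by
      rw [← Matrix.mulVec_mulVec, Matrix.star_mulVec, ← dotProduct_mulVec]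
    rw [hrw] at h0'
    have hny : ‖y‖ ^ 2 ≤ ‖x‖ ^ 2 := by
      rw [← inner_self_eq_norm_sq (𝕜 := ℂ) y, ← inner_self_eq_norm_sq (𝕜 := ℂ) x,
        hyy, hxx]
      exact h0'
    exact le_of_pow_le_pow_left₀ two_ne_zero (norm_nonneg x) hny
  have : ((B * (M * B)) i i).re ≤ ‖x‖ * ‖x‖ := by
    rw [h1, ← hxy]
    calc (inner ℂ x y : ℂ).re ≤ ‖(inner ℂ x y : ℂ)‖ := Complex.re_le_norm _
      _ ≤ ‖x‖ * ‖y‖ := norm_inner_le_norm x y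
      _ ≤ ‖x‖ * ‖x‖ := by
          exact mul_le_mul_of_nonneg_left hcon (norm_nonneg x)
  refine this.trans ?_
  rw [h2, ← hxx]
  calc ‖x‖ * ‖x‖ = ‖x‖ ^ 2 := (sq ‖x‖).symm
    _ = RCLike.re (inner (𝕜 := ℂ) x x) := (inner_self_eq_norm_sq x).symm
    _ = (inner (𝕜 := ℂ) x x).re := rfl
    _ ≤ (inner (𝕜 := ℂ) x x).re := le_refl _

/-- For a finite ensemble `{ρ_k}` of positive semidefinite operators with
`Σ Tr ρ_k = 1`, one has `Λ = Tr √(Σ ρ²) ≤ 1`. -/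
theorem holevo_curlander_lambda_le_one
    {n K : Type*} [Fintype n] [DecidableEq n] [Fintype K]
    (ρ : K → Matrix n n ℂ) (hρ : ∀ k, (ρ k).PosSemidef)
    (hnorm : (∑ k, (ρ k).trace) = 1)
    (hS : (∑ k, (ρ k) ^ 2).PosSemidef) :
    hS.sqrt.trace.re ≤ 1 := by
  classical
  set S : Matrix n n ℂ := hS.sqrt with hSdef
  have hSpsd : S.PosSemidef := hS.posSemidef_sqrt
  have hSS : S * S = ∑ k, ρ k ^ 2 := hS.sqrt_mul_self
  have hsum1 : ∑ k, ((ρ k).trace).re = 1 := by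
    have := congrArg Complex.re hnorm
    simpa [Complex.re_sum] using this
  have key : ∀ ε : ℝ, 0 < ε → S.trace.re ≤ 1 + ε * (Fintype.card n) := by
    intro ε hε
    set T : Matrix n n ℂ := S + (ε : ℂ) • 1 with hTdef
    have hTpd : T.PosDef := Matrix.PosDef.posSemidef_add hSpsd (posdef_smul_real hε)
    have hdet : IsUnit T.det := hTpd.isUnit.map (Matrix.detMonoidHom)
    have hTiT : T⁻¹ * T = 1 := Matrix.nonsing_inv_mul T hdet
    have hTTi : T * T⁻¹ = 1 := Matrix.mul_nonsing_inv T hdet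
    have hTinv : T⁻¹.PosDef := hTpd.inv
    have hTinvH : T⁻¹ᴴ = T⁻¹ := hTinv.isHermitian.eq
    -- T⁻¹ S = 1 - ε T⁻¹
    have hTinvS : T⁻¹ * S = 1 - (ε : ℂ) • T⁻¹ := by
      have hs : S = T - (ε : ℂ) • 1 := by rw [hTdef]; abel
      rw [hs, mul_sub, hTiT, Matrix.mul_smul, mul_one]
    -- T⁻¹ (S S) = S - ε 1 + ε² T⁻¹
    have hTA : T⁻¹ * (S * S) = S - (ε : ℂ) • 1 + ((ε : ℂ) * ε) • T⁻¹ := by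
      rw [← mul_assoc, hTinvS, sub_mul, one_mul, Matrix.smul_mul, hTinvS,
        smul_sub, smul_smul]
      abel
    -- pieces of T*T
    have hTT : T * T = S * S + ((ε : ℂ) • S + ((ε : ℂ) • S + ((ε : ℂ) * ε) • 1)) := by
      rw [hTdef]
      simp only [mul_add, add_mul, Matrix.smul_mul, Matrix.mul_smul, one_mul,
        mul_one, smul_smul]
      abel
    -- each ρ k ^ 2 ≤ T * T
    have hsub : ∀ k, (T * T - ρ k ^ 2).PosSemidef := by
      intro k
      have hrest : (∑ j ∈ Finset.univ.erase k, ρ j ^ 2).PosSemidef :=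
        psd_sum _ _ (fun j => (hρ j).pow 2)
      have hEq : T * T - ρ k ^ 2
          = (∑ j ∈ Finset.univ.erase k, ρ j ^ 2)
            + ((ε : ℂ) • S + ((ε : ℂ) • S + ((ε : ℂ) * ε) • 1)) := by
        rw [Finset.sum_erase_eq_sub (Finset.mem_univ k), hTT, ← hSS]
        abel
      rw [hEq]
      have h1 : ((ε : ℂ) • S).PosSemidef := psd_smul_real hSpsd hε.le
      have h2 : (((ε : ℂ) * ε) • (1 : Matrix n n ℂ)).PosSemidef := by
        have : ((ε : ℂ) * ε) = ((ε * ε : ℝ) : ℂ) := by push_cast; ring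
        rw [this]
        exact psd_smul_real Matrix.PosSemidef.one (mul_nonneg hε.le hε.le)
      exact hrest.add (h1.add (h1.add h2))
    -- contraction property for M := ρ k * T⁻¹
    have hcon : ∀ k, ((1 : Matrix n n ℂ) - (ρ k * T⁻¹)ᴴ * (ρ k * T⁻¹)).PosSemidef := by
      intro k
      have h1 : (T⁻¹ * (T * T - ρ k ^ 2) * T⁻¹ᴴ).PosSemidef :=
        (hsub k).mul_mul_conjTranspose_same T⁻¹
      have hEq : T⁻¹ * (T * T - ρ k ^ 2) * T⁻¹ᴴ
          = (1 : Matrix n n ℂ) - (ρ k * T⁻¹)ᴴ * (ρ k * T⁻¹) := by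
        rw [hTinvH, Matrix.conjTranspose_mul, hTinvH, (hρ k).isHermitian.eq,
          mul_sub, sub_mul]
        rw [show T⁻¹ * (T * T) * T⁻¹ = 1 by
          rw [← mul_assoc, hTiT, one_mul, hTTi]]
        rw [pow_two]
        noncomm_ring
      rw [← hEq]
      exact h1
    -- per-k trace bound
    have hper : ∀ k, ((T⁻¹ * ρ k ^ 2).trace).re ≤ ((ρ k).trace).re := by
      intro k
      have h1 : (T⁻¹ * ρ k ^ 2).trace = ((ρ k * T⁻¹) * ρ k).trace := by
        rw [Matrix.trace_mul_comm, Matrix.trace_mul_comm (ρ k * T⁻¹) (ρ k),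
          ← mul_assoc, ← pow_two]
      rw [h1]
      exact trace_re_mul_le (hρ k) (hcon k)
    -- summing
    have hsumA : (T⁻¹ * (S * S)).trace.re ≤ 1 := by
      rw [hSS, Finset.mul_sum, Matrix.trace_sum, Complex.re_sum]
      calc ∑ k, ((T⁻¹ * ρ k ^ 2).trace).re ≤ ∑ k, ((ρ k).trace).re :=
            Finset.sum_le_sum fun k _ => hper k
        _ = 1 := hsum1
    -- expand left side
    have hre : (T⁻¹ * (S * S)).trace.re
        = S.trace.re - ε * (Fintype.card n) + (ε * ε) * T⁻¹.trace.re := by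
      rw [hTA, Matrix.trace_add, Matrix.trace_sub, Matrix.trace_smul,
        Matrix.trace_smul, Matrix.trace_one]
      simp only [Complex.add_re, Complex.sub_re, smul_eq_mul, Complex.mul_re,
        Complex.ofReal_re, Complex.ofReal_im, Complex.natCast_re, Complex.natCast_im,
        Complex.mul_im, zero_mul, mul_zero, sub_zero, zero_sub]
      ring
    have hti : 0 ≤ T⁻¹.trace.re := psd_trace_re_nonneg hTinv.posSemidef
    nlinarith [hsumA, hre, mul_nonneg (mul_nonneg hε.le hε.le) hti]
  -- conclude
  by_contra hcontra
  push_neg at hcontra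
  set L := S.trace.re
  set c : ℝ := (Fintype.card n : ℝ) with hc
  have hc0 : 0 ≤ c := Nat.cast_nonneg _
  have hε : 0 < (L - 1) / (c + 1) := div_pos (by linarith) (by linarith)
  have := key _ hε
  have hlt : (L - 1) / (c + 1) * c < L - 1 := by
    rw [div_mul_eq_mul_div, div_lt_iff₀ (by linarith)]
    nlinarith
  linarith
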